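/- For integers n, k, i with 0 ≤ i < k ≤ n/4 and n ≥ 2, the probability that standard bit-wise mutation with rate 1/n applied to a bit string with i one-bits produces a string with exactly k one-bits, by flipping exactly k - i zero-bits and no other bits, is at least (1/e)·(3/(4k))^k. Formally: C(n-i, k-i)·(1/n)^{k-i}·(1-1/n)^{n-(k-i)} ≥ (1/e)·(3/(4k))^k. -/

import Mathlib

/-- The probability that bit-wise mutation with rate 1/n turns a string with
`i < k` one-bits into one with exactly `k` one-bits (flipping exactly `k - i`
zero-bits and nothing else) is at least `(1/e)·(3/(4k))^k`. -/
theorem stmt_3 (n k i : ℕ) (hi : i < k) (hk : 4 * k ≤ n) (hn : 2 ≤ n) :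
    (1 / Real.exp 1) * (3 / (4 * (k : ℝ))) ^ k ≤
      ((n - i).choose (k - i) : ℝ) * (1 / (n : ℝ)) ^ (k - i) *
        (1 - 1 / (n : ℝ)) ^ (n - (k - i)) := by
  set j := k - i with hj
  have hj1 : 1 ≤ j := by omega
  have hjk : j ≤ k := by omega
  have hk1 : 1 ≤ k := by omega
  have hnR : (0:ℝ) < n := by positivity
  have hkR : (0:ℝ) < k := by exact_mod_cast hk1
  have hjR : (0:ℝ) < j := by exact_mod_cast hj1
  have hq0 : (0:ℝ) ≤ 1 - 1/n := by
    rw [sub_nonneg, div_le_one hnR]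
    exact_mod_cast hn.trans' (by norm_num)
  have hq1 : (1:ℝ) - 1/n ≤ 1 := by
    have : (0:ℝ) ≤ 1/n := by positivity
    linarith
  -- Part 2 : 1/e ≤ (1-1/n)^(n-j)
  have part2 : 1 / Real.exp 1 ≤ (1 - 1/(n:ℝ)) ^ (n - j) := by
    have hn1 : (0:ℝ) < (n:ℝ) - 1 := by
      have : (2:ℝ) ≤ n := by exact_mod_cast hn
      linarith
    have hepos : (0:ℝ) < Real.exp (1/((n:ℝ)-1)) := Real.exp_pos _
    have hstep : Real.exp (-(1/((n:ℝ)-1))) ≤ 1 - 1/n := by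
      rw [Real.exp_neg, inv_le_iff_one_le_mul₀ hepos]
      have h1 : 1/((n:ℝ)-1) + 1 ≤ Real.exp (1/((n:ℝ)-1)) := Real.add_one_le_exp _
      have hid : (1 - 1/(n:ℝ)) * (1/((n:ℝ)-1) + 1) = 1 := by
        field_simp
        ring
      nlinarith [mul_le_mul_of_nonneg_left h1 hq0]
    have hc : ((n-1:ℕ):ℝ) = (n:ℝ) - 1 := by
      push_cast [Nat.cast_sub (by omega : 1 ≤ n)]; ring
    calc 1 / Real.exp 1 = Real.exp (-(1/((n:ℝ)-1))) ^ (n-1) := by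
          rw [← Real.exp_nat_mul, hc,
            show ((n:ℝ)-1) * -(1/((n:ℝ)-1)) = -1 by field_simp,
            Real.exp_neg, one_div]
      _ ≤ (1 - 1/(n:ℝ)) ^ (n-1) :=
          pow_le_pow_left₀ (Real.exp_pos _).le hstep _
      _ ≤ (1 - 1/(n:ℝ)) ^ (n-j) :=
          pow_le_pow_of_le_one hq0 hq1 (by omega)
  -- Part 1 : (3/(4k))^k ≤ choose * (1/n)^j
  have part1 : (3 / (4 * (k:ℝ))) ^ k ≤ ((n - i).choose j : ℝ) * (1 / (n : ℝ)) ^ j := by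
    have hb0 : (0:ℝ) ≤ 3 / (4 * (k:ℝ)) := by positivity
    have hb1 : 3 / (4 * (k:ℝ)) ≤ 1 := by
      rw [div_le_one (by positivity)]
      have : (1:ℝ) ≤ k := by exact_mod_cast hk1
      linarith
    have hchoose : (((n+1-k:ℕ) ^ j : ℕ) : ℝ) / (j.factorial : ℝ) ≤ ((n - i).choose j : ℝ) := by
      have h := Nat.pow_le_choose (α := ℝ) j (n - i)
      have heq : n - i + 1 - j = n + 1 - k := by omega
      rw [heq] at h
      exact_mod_cast h
    have hjfac : ((j.factorial) : ℝ) ≤ (j:ℝ)^j := by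
      exact_mod_cast Nat.factorial_le_pow j
    have hfacpos : (0:ℝ) < (j.factorial : ℝ) := by exact_mod_cast Nat.factorial_pos j
    have hcast : ((n+1-k:ℕ):ℝ) = (n:ℝ) + 1 - k := by
      push_cast [Nat.cast_sub (by omega : k ≤ n + 1)]; ring
    calc (3 / (4 * (k:ℝ))) ^ k ≤ (3 / (4 * (k:ℝ))) ^ j :=
          pow_le_pow_of_le_one hb0 hb1 hjk
      _ ≤ (3 / (4 * (j:ℝ))) ^ j := by
          apply pow_le_pow_left₀ hb0
          apply div_le_div_of_nonneg_left (by norm_num) (by positivity)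
          have : (j:ℝ) ≤ k := by exact_mod_cast hjk
          linarith
      _ = (3/4:ℝ)^j / (j:ℝ)^j := by
          rw [← div_pow]
          congr 1
          field_simp
      _ ≤ (3/4:ℝ)^j / (j.factorial : ℝ) :=
          div_le_div_of_nonneg_left (by positivity) hfacpos hjfac
      _ ≤ (((n:ℝ)+1-k)/n)^j / (j.factorial : ℝ) := by
          have h34 : (3/4:ℝ) ≤ ((n:ℝ)+1-k)/n := by
            rw [le_div_iff₀ hnR]
            have h4 : (4*k:ℝ) ≤ n := by exact_mod_cast hk
            linarith
          gcongr (?_ : ℝ) ^ j / _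
      _ = ((((n+1-k:ℕ) ^ j : ℕ) : ℝ) / (j.factorial : ℝ)) * (1/(n:ℝ))^j := by
          push_cast
          rw [hcast, div_pow, div_pow, one_pow]
          field_simp
      _ ≤ ((n - i).choose j : ℝ) * (1 / (n : ℝ)) ^ j :=
          mul_le_mul_of_nonneg_right hchoose (by positivity)
  calc (1 / Real.exp 1) * (3 / (4 * (k : ℝ))) ^ k
      = (3 / (4 * (k : ℝ))) ^ k * (1 / Real.exp 1) := mul_comm _ _
    _ ≤ (((n - i).choose j : ℝ) * (1 / (n : ℝ)) ^ j) * ((1 - 1/(n:ℝ)) ^ (n - j)) :=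
        mul_le_mul part1 part2 (by positivity) (by positivity)
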